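/- Every circuit of the matroid R₁₀ has even cardinality. -/

import Mathlib

/-- The columns of the standard representation of R₁₀: the vectors in GF(2)⁵
with exactly three nonzero entries. -/
def R10Cols : Set (Fin 5 → ZMod 2) :=
  {v | (Finset.univ.filter (fun i => v i = 1)).card = 3}

theorem r10_circuit_even (C : Set (Fin 5 → ZMod 2)) (hsub : C ⊆ R10Cols)
    (hdep : ¬ LinearIndependent (ZMod 2) (fun x : C => (x : Fin 5 → ZMod 2)))
    (hmin : ∀ C' ⊂ C,
      LinearIndependent (ZMod 2) (fun x : C' => (x : Fin 5 → ZMod 2))) :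
    Even C.ncard := by
  classical
  have hC : C.Finite := Set.toFinite C
  rw [linearIndependent_iff'] at hdep
  push_neg at hdep
  obtain ⟨s, g, hsum, i₀, hi₀, hg₀⟩ := hdep
  set T : Finset (Fin 5 → ZMod 2) :=
    (s.filter (fun i => g i ≠ 0)).image Subtype.val with hT
  have hTC : (↑T : Set (Fin 5 → ZMod 2)) ⊆ C := by
    intro x hx
    simp only [hT, Finset.coe_image, Set.mem_image, Finset.mem_coe,
      Finset.mem_filter] at hx
    obtain ⟨a, _, rfl⟩ := hx
    exact a.2
  have hone : ∀ a : ZMod 2, a ≠ 0 → a = 1 := by decide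
  have hTsum : ∑ x ∈ T, x = 0 := by
    rw [hT, Finset.sum_image (by intro a _ b _ h; exact Subtype.ext h)]
    rw [← hsum, Finset.sum_filter]
    apply Finset.sum_congr rfl
    intro i _
    by_cases h : g i = 0
    · simp [h]
    · simp [h, hone _ h]
  have hTmem : (↑i₀ : Fin 5 → ZMod 2) ∈ T :=
    Finset.mem_image_of_mem _ (Finset.mem_filter.2 ⟨hi₀, hg₀⟩)
  have hTeq : (↑T : Set (Fin 5 → ZMod 2)) = C := by
    by_contra hne
    have hss : (↑T : Set (Fin 5 → ZMod 2)) ⊂ C :=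
      ⟨hTC, fun h => hne (subset_antisymm hTC h)⟩
    have hind := hmin _ hss
    haveI : Fintype (↑(↑T : Set (Fin 5 → ZMod 2))) := FinsetCoe.fintype T
    rw [Fintype.linearIndependent_iff] at hind
    have hz : ∑ i : (↑T : Set (Fin 5 → ZMod 2)),
        (fun _ => (1 : ZMod 2)) i • (i : Fin 5 → ZMod 2) = 0 := by
      simp only [one_smul]
      refine (Finset.sum_set_coe (s := (↑T : Set (Fin 5 → ZMod 2))) (f := fun x => x)).trans ?_
      rw [Finset.toFinset_coe]
      exact hTsum
    have := hind (fun _ => 1) hz ⟨↑i₀, hTmem⟩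
    exact one_ne_zero this
  have hFT : hC.toFinset = T := by
    ext x
    simp [← hTeq]
    exact Iff.rfl
  have hsumC : ∑ x ∈ hC.toFinset, x = 0 := by rw [hFT]; exact hTsum
  have h1 : ∀ x ∈ hC.toFinset, (∑ i, x i) = 1 := by
    intro x hx
    have hx3 : (Finset.univ.filter (fun i => x i = 1)).card = 3 :=
      hsub (hC.mem_toFinset.1 hx)
    have hz : ∀ a : ZMod 2, a ≠ 1 → a = 0 := by decide
    rw [← Finset.sum_filter_add_sum_filter_not Finset.univ (fun i => x i = 1)]
    have h2 : ∑ i ∈ Finset.univ.filter (fun i => ¬ x i = 1), x i = 0 :=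
      Finset.sum_eq_zero (fun i hi => hz _ (Finset.mem_filter.1 hi).2)
    have h3 : ∑ i ∈ Finset.univ.filter (fun i => x i = 1), x i
        = ∑ i ∈ Finset.univ.filter (fun i => x i = 1), 1 :=
      Finset.sum_congr rfl (fun i hi => (Finset.mem_filter.1 hi).2)
    rw [h2, h3, Finset.sum_const, hx3]
    decide
  have hcard : ((hC.toFinset.card : ZMod 2)) = 0 := by
    have : ∑ x ∈ hC.toFinset, (∑ i, x i) = 0 := by
      rw [Finset.sum_comm]
      have : ∀ i, ∑ x ∈ hC.toFinset, x i = 0 := by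
        intro i
        simpa using congrFun hsumC i
      exact Finset.sum_eq_zero (fun i _ => this i)
    rw [Finset.sum_congr rfl h1, Finset.sum_const, nsmul_eq_mul, mul_one] at this
    exact this
  have hdvd : 2 ∣ hC.toFinset.card := by
    rwa [ZMod.natCast_eq_zero_iff] at hcard
  rw [Set.ncard_eq_toFinset_card' C]
  have : C.toFinset = hC.toFinset := by
    ext x; simp only [Set.mem_toFinset, Set.Finite.mem_toFinset]
  rw [this]
  exact even_iff_two_dvd.2 hdvd
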